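/- For all natural numbers a ≥ 1 and b, c: N(a, b, c) = a if and only if b = c and 2^(⌊log₂ a⌋ + 1) divides b; equivalently, b = c = k · 2^(⌊log₂ a⌋ + 1) for some natural number k. -/

import Mathlib

/-- Sprague–Grundy value of the Auxiliary Nim game `(*a) ⊞ ((*b) ⊕ (*c))`:
the mex of the Sprague–Grundy values of the one-move successors, which are
`(a',b,c)` with `a' < a`, `(a,b',c)` with `b' < b`, `(a,b,c')` with `c' < c`,
`(a',b',c)` with `a' < a, b' < b`, and `(a',b,c')` with `a' < a, c' < c`. -/
noncomputable def N3 (a b c : ℕ) : ℕ :=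
  sInf {m : ℕ |
    (∀ a', a' < a → N3 a' b c ≠ m) ∧
    (∀ b', b' < b → N3 a b' c ≠ m) ∧
    (∀ c', c' < c → N3 a b c' ≠ m) ∧
    (∀ a', a' < a → ∀ b', b' < b → N3 a' b' c ≠ m) ∧
    (∀ a', a' < a → ∀ c', c' < c → N3 a' b c' ≠ m)}
termination_by a + b + c
decreasing_by all_goals omega

/-- The mex set of a position. -/
def N3S (a b c : ℕ) : Set ℕ :=
  {m : ℕ |
    (∀ a', a' < a → N3 a' b c ≠ m) ∧
    (∀ b', b' < b → N3 a b' c ≠ m) ∧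
    (∀ c', c' < c → N3 a b c' ≠ m) ∧
    (∀ a', a' < a → ∀ b', b' < b → N3 a' b' c ≠ m) ∧
    (∀ a', a' < a → ∀ c', c' < c → N3 a' b c' ≠ m)}

lemma N3_eq (a b c : ℕ) : N3 a b c = sInf (N3S a b c) := by
  rw [N3]; rfl

lemma mem_N3S {a b c m : ℕ} :
    m ∈ N3S a b c ↔
    ((∀ a', a' < a → N3 a' b c ≠ m) ∧
    (∀ b', b' < b → N3 a b' c ≠ m) ∧
    (∀ c', c' < c → N3 a b c' ≠ m) ∧
    (∀ a', a' < a → ∀ b', b' < b → N3 a' b' c ≠ m) ∧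
    (∀ a', a' < a → ∀ c', c' < c → N3 a' b c' ≠ m)) := Iff.rfl

lemma N3_le_sum : ∀ (a b c : ℕ), N3 a b c ≤ a + b + c := by
  have key : ∀ n a b c, a + b + c ≤ n → N3 a b c ≤ a + b + c := by
    intro n
    induction n using Nat.strong_induction_on with
    | _ n ih =>
      intro a b c hn
      rcases Nat.eq_zero_or_pos n with rfl | hnpos
      · rw [N3_eq]
        apply Nat.sInf_le
        have ha : a = 0 := by omega
        have hb : b = 0 := by omega
        have hc : c = 0 := by omega
        subst ha hb hc
        exact ⟨fun a' h => absurd h (by omega), fun b' h => absurd h (by omega),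
          fun c' h => absurd h (by omega), fun a' h => absurd h (by omega),
          fun a' h => absurd h (by omega)⟩
      · rw [N3_eq]
        apply Nat.sInf_le
        refine ⟨?_, ?_, ?_, ?_, ?_⟩
        · intro a' h heq
          have := ih (n-1) (by omega) a' b c (by omega); omega
        · intro b' h heq
          have := ih (n-1) (by omega) a b' c (by omega); omega
        · intro c' h heq
          have := ih (n-1) (by omega) a b c' (by omega); omega
        · intro a' h b' h' heq
          have := ih (n-1) (by omega) a' b' c (by omega); omega
        · intro a' h c' h' heq
          have := ih (n-1) (by omega) a' b c' (by omega); omega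
  exact fun a b c => key (a+b+c) a b c le_rfl

lemma N3S_nonempty (a b c : ℕ) : (N3S a b c).Nonempty := by
  refine ⟨a + b + c, ?_, ?_, ?_, ?_, ?_⟩
  · intro a' h heq; have := N3_le_sum a' b c; omega
  · intro b' h heq; have := N3_le_sum a b' c; omega
  · intro c' h heq; have := N3_le_sum a b c'; omega
  · intro a' h b' h' heq; have := N3_le_sum a' b' c; omega
  · intro a' h c' h' heq; have := N3_le_sum a' b c'; omega

lemma N3_mem (a b c : ℕ) : N3 a b c ∈ N3S a b c := by
  rw [N3_eq]; exact Nat.sInf_mem (N3S_nonempty a b c)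

lemma N3_eq_of {a b c v : ℕ} (hv : v ∈ N3S a b c)
    (hm : ∀ m, m < v → m ∉ N3S a b c) : N3 a b c = v := by
  have h1 : N3 a b c ≤ v := by rw [N3_eq]; exact Nat.sInf_le hv
  rcases lt_or_eq_of_le h1 with h | h
  · exact absurd (N3_mem a b c) (hm _ h)
  · exact h

lemma le_N3_of {a b c v : ℕ} (hm : ∀ m, m < v → m ∉ N3S a b c) : v ≤ N3 a b c := by
  by_contra h
  exact hm _ (by omega) (N3_mem a b c)

lemma xor_add_of_lt : ∀ (t Q w : ℕ), w < 2^t → (2^t*Q) ^^^ w = 2^t*Q + w := by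
  intro t
  induction t with
  | zero => intro Q w hw; interval_cases w; simp
  | succ t ih =>
    intro Q w hw
    have hw' : w / 2 < 2^t := by
      have : w < 2^t * 2 := by rw [pow_succ] at hw; omega
      omega
    have h1 : Nat.bit (decide (w % 2 = 1)) (w/2) = w := by
      rw [Nat.bit_val]; rcases Nat.mod_two_eq_zero_or_one w with h | h <;> simp [h] <;> omega
    have h2 : Nat.bit false (2^t*Q) = 2^(t+1)*Q := by rw [Nat.bit_val]; simp; ring
    rw [← h1, ← h2, Nat.xor_bit, ih Q (w/2) hw']
    rw [Nat.bit_val, Nat.bit_val]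
    rcases Nat.mod_two_eq_zero_or_one w with h | h <;> simp [h] <;> ring

lemma xor_div_two_pow (p q u : ℕ) : (p ^^^ q) / 2^u = p / 2^u ^^^ q / 2^u := by
  simp only [← Nat.shiftRight_eq_div_pow]
  apply Nat.eq_of_testBit_eq
  intro i
  simp [Nat.testBit_shiftRight, Nat.testBit_xor]

/-- If the `2^u`-quotients differ, the xor is at least `2^u`. -/
lemma two_pow_le_xor {p q u : ℕ} (h : p / 2^u ≠ q / 2^u) : 2^u ≤ p ^^^ q := by
  by_contra hlt
  push_neg at hlt
  have h0 : (p ^^^ q) / 2^u = 0 := Nat.div_eq_of_lt hlt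
  rw [xor_div_two_pow] at h0
  exact h (xor_eq_zero_iff.mp h0)

/-- If `w < z` and `2^u ∣ z` then `2^u ≤ w ^^^ z`. -/
lemma two_pow_le_xor_of_dvd {w z u : ℕ} (hwz : w < z) (hdvd : 2^u ∣ z) : 2^u ≤ w ^^^ z := by
  apply two_pow_le_xor
  intro h
  obtain ⟨Q, rfl⟩ := hdvd
  rw [Nat.mul_div_cancel_left Q (Nat.two_pow_pos u)] at h
  have h2 : 2^u * (w / 2^u) ≤ w := Nat.mul_div_le w (2^u)
  rw [h] at h2
  omega

lemma top_xor_lt {u v k : ℕ} (hu1 : 2^k ≤ u) (hu2 : u < 2^(k+1)) (hv1 : 2^k ≤ v)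
    (hv2 : v < 2^(k+1)) : u ^^^ v < 2^k := by
  have hu : u = 2^k*1 + (u - 2^k) := by omega
  have hv : v = 2^k*1 + (v - 2^k) := by omega
  have hu0 : u - 2^k < 2^k := by rw [pow_succ] at hu2; omega
  have hv0 : v - 2^k < 2^k := by rw [pow_succ] at hv2; omega
  calc u ^^^ v = (2^k*1 ^^^ (u - 2^k)) ^^^ (2^k*1 ^^^ (v - 2^k)) := by
        rw [xor_add_of_lt _ _ _ hu0, xor_add_of_lt _ _ _ hv0, ← hu, ← hv]
    _ = (u - 2^k) ^^^ (v - 2^k) := by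
        rw [Nat.xor_comm (2^k*1) (u - 2^k), Nat.xor_assoc, ← Nat.xor_assoc (2^k*1),
          Nat.xor_self, Nat.zero_xor, Nat.xor_comm]
    _ < 2^k := Nat.xor_lt_two_pow hu0 hv0

/-- `N3` is symmetric in its last two arguments. -/
lemma N3_symm : ∀ (a b c : ℕ), N3 a b c = N3 a c b := by
  have key : ∀ n a b c, a + b + c ≤ n → N3 a b c = N3 a c b := by
    intro n
    induction n using Nat.strong_induction_on with
    | _ n ih =>
      intro a b c hn
      have IH : ∀ a' b' c', a' + b' + c' < a + b + c → N3 a' b' c' = N3 a' c' b' := by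
        intro a' b' c' h
        exact ih (n-1) (by omega) a' b' c' (by omega)
      rw [N3_eq, N3_eq]
      congr 1
      ext m
      constructor
      · rintro ⟨h1, h2, h3, h4, h5⟩
        refine ⟨?_, ?_, ?_, ?_, ?_⟩
        · intro a' ha; rw [IH a' c b (by omega)]; exact h1 a' ha
        · intro b' hb; rw [IH a b' b (by omega)]; exact h3 b' hb
        · intro c' hc; rw [IH a c c' (by omega)]; exact h2 c' hc
        · intro a' ha b' hb; rw [IH a' b' b (by omega)]; exact h5 a' ha b' hb
        · intro a' ha c' hc; rw [IH a' c c' (by omega)]; exact h4 a' ha c' hc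
      · rintro ⟨h1, h2, h3, h4, h5⟩
        refine ⟨?_, ?_, ?_, ?_, ?_⟩
        · intro a' ha; rw [IH a' b c (by omega)]; exact h1 a' ha
        · intro b' hb; rw [IH a b' c (by omega)]; exact h3 b' hb
        · intro c' hc; rw [IH a b c' (by omega)]; exact h2 c' hc
        · intro a' ha b' hb; rw [IH a' b' c (by omega)]; exact h5 a' ha b' hb
        · intro a' ha c' hc; rw [IH a' b c' (by omega)]; exact h4 a' ha c' hc
  exact fun a b c => key (a+b+c) a b c le_rfl

/-- With an empty first heap, the game is plain two-pile Nim. -/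
lemma N3_zero : ∀ (b c : ℕ), N3 0 b c = b ^^^ c := by
  have key : ∀ n b c, b + c ≤ n → N3 0 b c = b ^^^ c := by
    intro n
    induction n using Nat.strong_induction_on with
    | _ n ih =>
      intro b c hn
      have IH : ∀ b' c', b' + c' < b + c → N3 0 b' c' = b' ^^^ c' := by
        intro b' c' h
        exact ih (n-1) (by omega) b' c' (by omega)
      apply N3_eq_of
      · refine ⟨?_, ?_, ?_, ?_, ?_⟩
        · intro a' ha; omega
        · intro b' hb heq
          rw [IH b' c (by omega)] at heq
          exact absurd (Nat.xor_left_inj.mp heq) (by omega)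
        · intro c' hc heq
          rw [IH b c' (by omega)] at heq
          exact absurd (Nat.xor_right_inj.mp heq) (by omega)
        · intro a' ha; omega
        · intro a' ha; omega
      · intro m hm hmem
        obtain ⟨h1, h2, h3, h4, h5⟩ := hmem
        rcases Nat.lt_xor_cases hm with h | h
        · exact h2 _ h (by rw [IH (m ^^^ c) c (by omega)]; rw [xor_cancel_right])
        · exact h3 _ h (by rw [IH b (m ^^^ b) (by omega), Nat.xor_comm m b,
            xor_cancel_left])
  exact fun b c => key (b+c) b c le_rfl

/-- With an empty third heap the value is the sum. -/
lemma N3_sum0 : ∀ (x y : ℕ), N3 x y 0 = x + y := by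
  have key : ∀ n x y, x + y ≤ n → N3 x y 0 = x + y := by
    intro n
    induction n using Nat.strong_induction_on with
    | _ n ih =>
      intro x y hn
      have IH : ∀ x' y', x' + y' < x + y → N3 x' y' 0 = x' + y' := by
        intro x' y' h
        exact ih (n-1) (by omega) x' y' (by omega)
      apply N3_eq_of
      · refine ⟨?_, ?_, ?_, ?_, ?_⟩
        · intro a' ha heq; rw [IH a' y (by omega)] at heq; omega
        · intro b' hb heq; rw [IH x b' (by omega)] at heq; omega
        · intro c' hc; omega
        · intro a' ha b' hb heq; rw [IH a' b' (by omega)] at heq; omega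
        · intro a' ha c' hc; omega
      · intro m hm hmem
        obtain ⟨h1, h2, h3, h4, h5⟩ := hmem
        rcases le_or_gt x m with h | h
        · exact h2 (m - x) (by omega) (by rw [IH x (m-x) (by omega)]; omega)
        · rcases Nat.eq_zero_or_pos y with rfl | hy
          · exact h1 m (by omega) (by rw [IH m 0 (by omega)]; omega)
          · exact h4 m (by omega) 0 hy (by rw [IH m 0 (by omega)]; omega)
  exact fun x y => key (x+y) x y le_rfl

/-- Lower bound: the Grundy value is at least the xor of the two Nim heaps. -/
lemma N3_ge_xor (x y z : ℕ) : y ^^^ z ≤ N3 x y z := by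
  apply le_N3_of
  intro m hm hmem
  obtain ⟨h1, h2, h3, h4, h5⟩ := hmem
  have hval1 : N3 0 (m ^^^ z) z = m := by rw [N3_zero, xor_cancel_right]
  have hval2 : N3 0 y (m ^^^ y) = m := by rw [N3_zero, Nat.xor_comm, xor_cancel_right]
  rcases Nat.lt_xor_cases hm with h | h
  · rcases Nat.eq_zero_or_pos x with rfl | hx
    · exact h2 _ h hval1
    · exact h4 0 hx _ h hval1
  · rcases Nat.eq_zero_or_pos x with rfl | hx
    · exact h3 _ h hval2
    · exact h5 0 hx _ h hval2

/-- Joint inductive statement: the main characterization together with the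
key small-value lemma `N3 x (2^u*Q + r) (2^u*Q) = x + r`. -/
def AuxP (a b c : ℕ) : Prop :=
  (1 ≤ a → (N3 a b c = a ↔ b = c ∧ 2 ^ (Nat.log 2 a + 1) ∣ b)) ∧
  (∀ u Q r, 1 ≤ Q → 1 ≤ r → a + r < 2^u → b = 2^u*Q + r → c = 2^u*Q →
    N3 a b c = a + r)

theorem aux_mutual : ∀ n a b c, a + b + c ≤ n → AuxP a b c := by
  intro n
  induction n using Nat.strong_induction_on with
  | _ n ih =>
    intro a b c hn
    have IH : ∀ a' b' c', a' + b' + c' < a + b + c → AuxP a' b' c' := by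
      intro a' b' c' h
      exact ih (n-1) (by omega) a' b' c' (by omega)
    -- Part 1 : the ⇐ direction of the main characterization.
    have part1 : 1 ≤ a → b = c → 2 ^ (Nat.log 2 a + 1) ∣ b → N3 a b c = a := by
      intro ha hbc hdvd
      subst hbc
      have haP : a < 2 ^ (Nat.log 2 a + 1) := Nat.lt_pow_succ_log_self (by norm_num) a
      have hdvd' : ∀ m, 1 ≤ m → m ≤ a → 2 ^ (Nat.log 2 m + 1) ∣ b := by
        intro m hm1 hma
        refine dvd_trans (pow_dvd_pow 2 ?_) hdvd
        have := Nat.log_mono_right (b := 2) hma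
        omega
      apply N3_eq_of
      · refine ⟨?_, ?_, ?_, ?_, ?_⟩
        · intro a' ha' heq
          rcases Nat.eq_zero_or_pos a' with rfl | ha'pos
          · rw [N3_zero, Nat.xor_self] at heq; omega
          · have := ((IH a' b b (by omega)).1 ha'pos).mpr ⟨rfl, hdvd' a' ha'pos (by omega)⟩
            omega
        · intro b' hb' heq
          obtain ⟨hbb, -⟩ := ((IH a b' b (by omega)).1 ha).mp heq
          omega
        · intro c' hc' heq
          obtain ⟨hbb, -⟩ := ((IH a b c' (by omega)).1 ha).mp heq
          omega
        · intro a' ha' b' hb' heq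
          have hx : 2 ^ (Nat.log 2 a + 1) ≤ b' ^^^ b := two_pow_le_xor_of_dvd hb' hdvd
          have hg := N3_ge_xor a' b' b
          omega
        · intro a' ha' c' hc' heq
          have hx : 2 ^ (Nat.log 2 a + 1) ≤ c' ^^^ b := two_pow_le_xor_of_dvd hc' hdvd
          rw [Nat.xor_comm] at hx
          have hg := N3_ge_xor a' b c'
          omega
      · intro m hm hmem
        obtain ⟨h1, -, -, -, -⟩ := hmem
        apply h1 m hm
        rcases Nat.eq_zero_or_pos m with rfl | hmpos
        · rw [N3_zero, Nat.xor_self]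
        · exact ((IH m b b (by omega)).1 hmpos).mpr ⟨rfl, hdvd' m hmpos (by omega)⟩
    -- Part 3 : the small-value lemma.
    have part3 : ∀ u Q r, 1 ≤ Q → 1 ≤ r → a + r < 2^u → b = 2^u*Q + r → c = 2^u*Q →
        N3 a b c = a + r := by
      intro u Q r hQ hr hv hb hc
      subst hb; subst hc
      have hrP : r < 2^u := by omega
      have hPpos : 0 < 2^u := Nat.two_pow_pos u
      have hzdvd : (2:ℕ)^u ∣ 2^u*Q := dvd_mul_right _ _
      have hval0 : ∀ j, j ≤ r → N3 0 (2^u*Q + j) (2^u*Q) = j := by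
        intro j hj
        rw [N3_zero, ← xor_add_of_lt u Q j (by omega), Nat.xor_comm (2^u*Q) j,
          xor_cancel_right]
      rcases Nat.eq_zero_or_pos a with rfl | ha
      · rw [hval0 r le_rfl]; omega
      -- now 1 ≤ a
      have hvz : ∀ x', 1 ≤ x' → x' ≤ a → N3 x' (2^u*Q) (2^u*Q) = x' := by
        intro x' h1 h2
        refine ((IH x' (2^u*Q) (2^u*Q) (by omega)).1 h1).mpr ⟨rfl, ?_⟩
        refine dvd_trans (pow_dvd_pow 2 ?_) hzdvd
        have : Nat.log 2 x' < u := Nat.log_lt_of_lt_pow (by omega) (by omega)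
        omega
      have hvj : ∀ x' j, 1 ≤ j → x' + j < a + r → N3 x' (2^u*Q + j) (2^u*Q) = x' + j := by
        intro x' j h1 h2
        exact (IH x' (2^u*Q + j) (2^u*Q) (by omega)).2 u Q j hQ h1 (by omega) rfl rfl
      have hboundb : ∀ x' b'', b'' < 2^u*Q → 2^u ≤ N3 x' b'' (2^u*Q) := by
        intro x' b'' hb''
        exact le_trans (two_pow_le_xor_of_dvd hb'' hzdvd) (N3_ge_xor _ _ _)
      have hboundc : ∀ x' c'', c'' < 2^u*Q → 2^u ≤ N3 x' (2^u*Q + r) c'' := by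
        intro x' c'' hc''
        refine le_trans (two_pow_le_xor ?_) (N3_ge_xor _ _ _)
        have hy : (2^u*Q + r) / 2^u = Q := by
          rw [Nat.mul_add_div hPpos, Nat.div_eq_of_lt hrP]; omega
        have hcq : c'' / 2^u < Q := by
          rw [Nat.div_lt_iff_lt_mul hPpos, Nat.mul_comm Q (2^u)]; omega
        omega
      apply N3_eq_of
      · refine ⟨?_, ?_, ?_, ?_, ?_⟩
        · intro a' ha' heq
          rcases Nat.eq_zero_or_pos a' with rfl | h
          · rw [hval0 r le_rfl] at heq; omega
          · rw [hvj a' r hr (by omega)] at heq; omega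
        · intro b'' hb'' heq
          rcases lt_trichotomy b'' (2^u*Q) with h | h | h
          · have := hboundb a b'' h; omega
          · rw [h, hvz a ha le_rfl] at heq; omega
          · have hj : b'' = 2^u*Q + (b'' - 2^u*Q) := by omega
            rw [hj, hvj a (b'' - 2^u*Q) (by omega) (by omega)] at heq
            omega
        · intro c'' hc'' heq
          have := hboundc a c'' hc''; omega
        · intro a' ha' b'' hb'' heq
          rcases lt_trichotomy b'' (2^u*Q) with h | h | h
          · have := hboundb a' b'' h; omega
          · rcases Nat.eq_zero_or_pos a' with rfl | hp
            · rw [h, N3_zero, Nat.xor_self] at heq; omega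
            · rw [h, hvz a' hp (by omega)] at heq; omega
          · rcases Nat.eq_zero_or_pos a' with rfl | hp
            · have hj : b'' = 2^u*Q + (b'' - 2^u*Q) := by omega
              rw [hj, hval0 (b'' - 2^u*Q) (by omega)] at heq
              omega
            · have hj : b'' = 2^u*Q + (b'' - 2^u*Q) := by omega
              rw [hj, hvj a' (b'' - 2^u*Q) (by omega) (by omega)] at heq
              omega
        · intro a' ha' c'' hc'' heq
          have := hboundc a' c'' hc''; omega
      · intro m hm hmem
        obtain ⟨h1, h2, h3, h4, h5⟩ := hmem
        rcases lt_trichotomy m a with h | h | h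
        · apply h4 m h (2^u*Q) (by omega)
          rcases Nat.eq_zero_or_pos m with rfl | hp
          · rw [N3_zero, Nat.xor_self]
          · exact hvz m hp (by omega)
        · apply h2 (2^u*Q) (by omega)
          rw [hvz a ha le_rfl, h]
        · apply h2 (2^u*Q + (m - a)) (by omega)
          rw [hvj a (m - a) (by omega) (by omega)]
          omega
    -- Part 2 : the ⇒ direction (contrapositive), for ordered heaps.
    have part2core : ∀ b0 c0, b0 + c0 ≤ b + c → b0 ≤ c0 → 1 ≤ a →
        ¬(b0 = c0 ∧ 2 ^ (Nat.log 2 a + 1) ∣ b0) → N3 a b0 c0 ≠ a := by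
      intro b0 c0 hsum hle ha hbad heq
      have haP : a < 2 ^ (Nat.log 2 a + 1) := Nat.lt_pow_succ_log_self (by norm_num) a
      have haL : 2 ^ (Nat.log 2 a) ≤ a := Nat.pow_log_le_self 2 (by omega)
      have hmem := N3_mem a b0 c0
      rw [heq] at hmem
      obtain ⟨h1, h2, h3, h4, h5⟩ := hmem
      by_cases hdvd : 2 ^ (Nat.log 2 a + 1) ∣ b0
      · have hlt : b0 < c0 := lt_of_le_of_ne hle (fun h => hbad ⟨h, hdvd⟩)
        exact h3 b0 hlt (((IH a b0 b0 (by omega)).1 ha).mpr ⟨rfl, hdvd⟩)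
      · have hb1 : 1 ≤ b0 := by
          rcases Nat.eq_zero_or_pos b0 with rfl | h
          · exact absurd (dvd_zero _) hdvd
          · exact h
        by_cases hba : b0 ≤ a
        · refine h5 (a - b0) (by omega) 0 (by omega) ?_
          rw [N3_sum0]; omega
        · push_neg at hba
          have hr0 : b0 % 2 ^ (Nat.log 2 a + 1) ≠ 0 := fun h => hdvd (Nat.dvd_of_mod_eq_zero h)
          have hrP : b0 % 2 ^ (Nat.log 2 a + 1) < 2 ^ (Nat.log 2 a + 1) :=
            Nat.mod_lt _ (Nat.two_pow_pos _)
          have hb0eq : b0 = 2 ^ (Nat.log 2 a + 1) * (b0 / 2 ^ (Nat.log 2 a + 1))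
              + b0 % 2 ^ (Nat.log 2 a + 1) := (Nat.div_add_mod b0 _).symm
          by_cases hra : b0 % 2 ^ (Nat.log 2 a + 1) ≤ a
          · have hbP : 2 ^ (Nat.log 2 a + 1) ≤ b0 := by
              by_contra hh
              push_neg at hh
              have := Nat.mod_eq_of_lt hh
              omega
            have hQ : 1 ≤ b0 / 2 ^ (Nat.log 2 a + 1) :=
              (Nat.one_le_div_iff (Nat.two_pow_pos _)).mpr hbP
            refine h5 (a - b0 % 2 ^ (Nat.log 2 a + 1)) (by omega)
              (b0 - b0 % 2 ^ (Nat.log 2 a + 1)) (by omega) ?_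
            have hkey := (IH (a - b0 % 2 ^ (Nat.log 2 a + 1)) b0
              (b0 - b0 % 2 ^ (Nat.log 2 a + 1)) (by omega)).2 (Nat.log 2 a + 1)
              (b0 / 2 ^ (Nat.log 2 a + 1)) (b0 % 2 ^ (Nat.log 2 a + 1)) hQ (by omega)
              (by omega) hb0eq (by omega)
            rw [hkey]; omega
          · push_neg at hra
            have hxr : (b0 % 2 ^ (Nat.log 2 a + 1)) ^^^ a < 2 ^ (Nat.log 2 a) := by
              refine top_xor_lt ?_ ?_ haL ?_
              · omega
              · rw [pow_succ] at hrP ⊢; omega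
              · rw [pow_succ]; omega
            have hxrP : (b0 % 2 ^ (Nat.log 2 a + 1)) ^^^ a < 2 ^ (Nat.log 2 a + 1) :=
              Nat.xor_lt_two_pow hrP haP
            have hkey : a ^^^ b0 = 2 ^ (Nat.log 2 a + 1) * (b0 / 2 ^ (Nat.log 2 a + 1))
                + ((b0 % 2 ^ (Nat.log 2 a + 1)) ^^^ a) := by
              conv_lhs => rw [hb0eq, ← xor_add_of_lt (Nat.log 2 a + 1)
                (b0 / 2 ^ (Nat.log 2 a + 1)) (b0 % 2 ^ (Nat.log 2 a + 1)) hrP]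
              rw [Nat.xor_comm a, Nat.xor_assoc, xor_add_of_lt _ _ _ hxrP]
            have hxor_lt : a ^^^ b0 < b0 := by
              rw [hkey]
              omega
            refine h5 0 (by omega) (a ^^^ b0) (by omega) ?_
            rw [N3_zero, Nat.xor_comm a b0, ← Nat.xor_assoc, Nat.xor_self, Nat.zero_xor]
    refine ⟨fun ha => ⟨fun heq => ?_, fun h => part1 ha h.1 h.2⟩, part3⟩
    by_contra hbad
    rcases le_total b c with hle | hle
    · exact part2core b c le_rfl hle ha hbad heq
    · refine part2core c b (by omega) hle ha ?_ (by rw [← N3_symm]; exact heq)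
      rintro ⟨hcb, hdvd2⟩
      exact hbad ⟨hcb.symm, hcb ▸ hdvd2⟩

/-- `N(a,b,c) = a` iff `b = c` and `2 ^ (⌊log₂ a⌋ + 1)` divides `b`;
equivalently `b = c = k * 2 ^ (⌊log₂ a⌋ + 1)` for some `k`. -/
theorem N3_eq_aux_iff (a b c : ℕ) (ha : 1 ≤ a) :
    N3 a b c = a ↔ (b = c ∧ 2 ^ (Nat.log 2 a + 1) ∣ b) :=
  (aux_mutual (a+b+c) a b c le_rfl).1 ha
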